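/- Let m, n ≥ 1 and let P ⊆ ℝ^{m+n+2} be the convex hull of the vectors e_a + e_b for 1 ≤ a ≤ m+1 and m+2 ≤ b ≤ m+n+2 (the edge polytope of the complete bipartite graph K_{m+1,n+1}). Let π : ℝ^{m+n+2} → ℝ^{m+n} be the projection deleting the (m+1)-st and (m+n+2)-nd coordinates, and let Q = {x ∈ ℝ^{m+n} : x_k ≥ 0 for all k, Σ_{k=1}^{m} x_k ≤ 1, Σ_{k=m+1}^{m+n} x_k ≤ 1} (the chain polytope of the poset Π_{m,n}). Then π restricted to P is injective, π(P) = Q, and π maps P ∩ ℤ^{m+n+2} bijectively onto Q ∩ ℤ^{m+n}. -/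

import Mathlib

open Finset

/-- The projection `ℝ^{m+n+2} → ℝ^{m+n}` deleting the `(m+1)`-st and `(m+n+2)`-nd
coordinates (0-based: coordinates `m` and `m+n+1`). -/
def proj (m n : ℕ) (x : Fin (m + n + 2) → ℝ) : Fin (m + n) → ℝ :=
  fun k => if (k : ℕ) < m then x ⟨(k : ℕ), by have := k.2; omega⟩
           else x ⟨(k : ℕ) + 1, by have := k.2; omega⟩

/-- The edge polytope of the complete bipartite graph `K_{m+1,n+1}`:
the convex hull of `e_a + e_b` for `a` in the first part (0-based indices `0,…,m`) and
`b` in the second part (0-based indices `m+1,…,m+n+1`). -/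
noncomputable def edgePolytopeBip (m n : ℕ) : Set (Fin (m + n + 2) → ℝ) :=
  convexHull ℝ {x | ∃ a b : Fin (m + n + 2), (a : ℕ) < m + 1 ∧ m + 1 ≤ (b : ℕ) ∧
    x = fun k => (if k = a then 1 else 0) + (if k = b then 1 else 0)}

/-- The chain polytope of the poset `Π_{m,n}`. -/
def chainPolytope (m n : ℕ) : Set (Fin (m + n) → ℝ) :=
  {x | (∀ k, 0 ≤ x k) ∧
    (∑ k ∈ univ.filter (fun k : Fin (m + n) => (k : ℕ) < m), x k ≤ 1) ∧
    (∑ k ∈ univ.filter (fun k : Fin (m + n) => m ≤ (k : ℕ)), x k ≤ 1)}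

/-- The lattice points of a real coordinate space. -/
def latticePts (N : ℕ) : Set (Fin N → ℝ) := {x | ∀ k, ∃ z : ℤ, x k = (z : ℝ)}

namespace Stmt6

variable (m n : ℕ)

def FA : Finset (Fin (m+n+2)) := univ.filter (fun k => (k:ℕ) < m + 1)
def FB : Finset (Fin (m+n+2)) := univ.filter (fun k => m + 1 ≤ (k:ℕ))

def Pset : Set (Fin (m+n+2) → ℝ) :=
  {x | (∀ k, 0 ≤ x k) ∧ ∑ k ∈ FA m n, x k = 1 ∧ ∑ k ∈ FB m n, x k = 1}

lemma mem_FA {j : Fin (m+n+2)} : j ∈ FA m n ↔ (j:ℕ) < m + 1 := by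
  simp [FA]

lemma mem_FB {j : Fin (m+n+2)} : j ∈ FB m n ↔ m + 1 ≤ (j:ℕ) := by
  simp [FB]

lemma edge_eq : edgePolytopeBip m n = Pset m n := by
  apply le_antisymm
  · apply convexHull_min
    · rintro x ⟨a, b, ha, hb, rfl⟩
      have hab : a ≠ b := by intro h; subst h; omega
      refine ⟨fun k => by positivity, ?_, ?_⟩
      · rw [Finset.sum_add_distrib, Finset.sum_ite_eq', Finset.sum_ite_eq']
        rw [if_pos ((mem_FA m n).2 ha), if_neg (fun h => by have := (mem_FA m n).1 h; omega)]
        ring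
      · rw [Finset.sum_add_distrib, Finset.sum_ite_eq', Finset.sum_ite_eq']
        rw [if_neg (fun h => by have := (mem_FB m n).1 h; omega), if_pos ((mem_FB m n).2 hb)]
        ring
    · rintro x hx y hy a b ha hb hab
      obtain ⟨hx0, hxA, hxB⟩ := hx
      obtain ⟨hy0, hyA, hyB⟩ := hy
      refine ⟨fun k => by have := hx0 k; have := hy0 k; simp only [Pi.add_apply, Pi.smul_apply, smul_eq_mul]; positivity, ?_, ?_⟩ <;>
        simp only [Pi.add_apply, Pi.smul_apply, smul_eq_mul, Finset.sum_add_distrib,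
          ← Finset.mul_sum, hxA, hxB, hyA, hyB, mul_one, hab]
  · rintro x ⟨hx0, hxA, hxB⟩
    have hw : ∀ p ∈ FA m n ×ˢ FB m n, 0 ≤ x p.1 * x p.2 := by
      intro p _; exact mul_nonneg (hx0 _) (hx0 _)
    have hws : ∑ p ∈ FA m n ×ˢ FB m n, x p.1 * x p.2 = 1 := by
      rw [Finset.sum_product, ← Finset.sum_mul_sum, hxA, hxB, mul_one]
    have hz : ∀ p ∈ FA m n ×ˢ FB m n,
        (fun k => (if k = p.1 then (1:ℝ) else 0) + (if k = p.2 then 1 else 0)) ∈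
        {x : Fin (m+n+2) → ℝ | ∃ a b : Fin (m + n + 2), (a : ℕ) < m + 1 ∧ m + 1 ≤ (b : ℕ) ∧
          x = fun k => (if k = a then 1 else 0) + (if k = b then 1 else 0)} := by
      rintro ⟨a, b⟩ hp
      rw [Finset.mem_product] at hp
      exact ⟨a, b, (mem_FA m n).1 hp.1, (mem_FB m n).1 hp.2, rfl⟩
    have := Finset.centerMass_mem_convexHull (FA m n ×ˢ FB m n) hw (by rw [hws]; norm_num) hz
    rw [Finset.centerMass_eq_of_sum_1 _ _ hws] at this
    unfold edgePolytopeBip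
    convert this using 1
    funext k
    rw [Finset.sum_apply]
    have key : ∑ p ∈ FA m n ×ˢ FB m n, (x p.1 * x p.2) •
        ((fun k => (if k = p.1 then (1:ℝ) else 0) + (if k = p.2 then 1 else 0)) k)
        = ∑ p ∈ FA m n ×ˢ FB m n,
          ((x p.1 * x p.2) * (if k = p.1 then 1 else 0) + (x p.1 * x p.2) * (if k = p.2 then 1 else 0)) := by
      apply Finset.sum_congr rfl; intro p _; simp [mul_add]
    simp only [Pi.smul_apply]
    rw [key, Finset.sum_add_distrib, Finset.sum_product, Finset.sum_product]
    have inner1 : ∀ a, ∑ b ∈ FB m n, (x a * x b) * (if k = a then (1:ℝ) else 0)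
        = if a = k then x a else 0 := by
      intro a
      rw [← Finset.sum_mul, ← Finset.mul_sum, hxB, mul_one]
      by_cases h : a = k
      · simp [h]
      · simp [h, Ne.symm h]
    have inner2 : ∀ a, ∑ b ∈ FB m n, (x a * x b) * (if k = b then (1:ℝ) else 0)
        = x a * (if k ∈ FB m n then x k else 0) := by
      intro a
      simp only [mul_assoc]
      rw [← Finset.mul_sum]
      congr 1
      rw [← Finset.sum_ite_eq' (FB m n) k x]
      apply Finset.sum_congr rfl
      intro b _
      by_cases h : b = k
      · simp [h]
      · simp [h, Ne.symm h]
    simp only [inner1, inner2, Finset.sum_ite_eq' (FA m n) k x, ← Finset.sum_mul, hxA, one_mul]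
    by_cases hk : (k:ℕ) < m + 1
    · rw [if_pos ((mem_FA m n).2 hk), if_neg (fun h => by have := (mem_FB m n).1 h; omega)]
      ring
    · rw [if_neg (fun h => hk ((mem_FA m n).1 h)), if_pos ((mem_FB m n).2 (by omega))]
      ring


lemma mk_m_mem_FA : (⟨m, by omega⟩ : Fin (m+n+2)) ∈ FA m n := (mem_FA m n).2 (by simp)

lemma mk_top_mem_FB : (⟨m+n+1, by omega⟩ : Fin (m+n+2)) ∈ FB m n := (mem_FB m n).2 (by simp)

lemma FA_erase : (FA m n).erase ⟨m, by omega⟩ =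
    univ.filter (fun j : Fin (m+n+2) => (j:ℕ) < m) := by
  ext j
  simp [FA, Fin.ext_iff]
  omega

lemma FB_erase : (FB m n).erase ⟨m+n+1, by omega⟩ =
    univ.filter (fun j : Fin (m+n+2) => m + 1 ≤ (j:ℕ) ∧ (j:ℕ) < m+n+1) := by
  ext j
  have := j.2
  simp [FB, Fin.ext_iff]
  omega

lemma sumA_proj (x : Fin (m+n+2) → ℝ) :
    ∑ k ∈ univ.filter (fun k : Fin (m+n) => (k:ℕ) < m), proj m n x k
    = ∑ j ∈ univ.filter (fun j : Fin (m+n+2) => (j:ℕ) < m), x j := by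
  refine Finset.sum_bij' (fun k hk => ⟨(k:ℕ), by omega⟩)
    (fun j hj => ⟨(j:ℕ), by simp at hj; omega⟩) ?_ ?_ ?_ ?_ ?_
  · intro k hk; simp at hk ⊢; omega
  · intro j hj; simp at hj ⊢; omega
  · intro k hk; apply Fin.ext; rfl
  · intro j hj; apply Fin.ext; rfl
  · intro k hk
    simp only [Finset.mem_filter] at hk
    simp only [proj, if_pos hk.2]

lemma sumB_proj (x : Fin (m+n+2) → ℝ) :
    ∑ k ∈ univ.filter (fun k : Fin (m+n) => m ≤ (k:ℕ)), proj m n x k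
    = ∑ j ∈ univ.filter (fun j : Fin (m+n+2) => m + 1 ≤ (j:ℕ) ∧ (j:ℕ) < m+n+1), x j := by
  refine Finset.sum_bij' (fun k hk => ⟨(k:ℕ) + 1, by have := k.2; omega⟩)
    (fun j hj => ⟨(j:ℕ) - 1, by simp at hj; omega⟩) ?_ ?_ ?_ ?_ ?_
  · intro k hk; simp at hk ⊢; have := k.2; omega
  · intro j hj; simp at hj ⊢; omega
  · intro k hk; apply Fin.ext; simp
  · intro j hj; simp at hj; apply Fin.ext; simp; omega
  · intro k hk
    simp only [Finset.mem_filter] at hk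
    simp only [proj, if_neg (by omega : ¬ (k:ℕ) < m)]

lemma sum_split_A {x : Fin (m+n+2) → ℝ} (hx : x ∈ Pset m n) :
    x ⟨m, by omega⟩ + ∑ j ∈ univ.filter (fun j : Fin (m+n+2) => (j:ℕ) < m), x j = 1 := by
  rw [← FA_erase, Finset.add_sum_erase _ _ (mk_m_mem_FA m n)]
  exact hx.2.1

lemma sum_split_B {x : Fin (m+n+2) → ℝ} (hx : x ∈ Pset m n) :
    x ⟨m+n+1, by omega⟩ +
      ∑ j ∈ univ.filter (fun j : Fin (m+n+2) => m + 1 ≤ (j:ℕ) ∧ (j:ℕ) < m+n+1), x j = 1 := by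
  rw [← FB_erase, Finset.add_sum_erase _ _ (mk_top_mem_FB m n)]
  exact hx.2.2

lemma inj_on_Pset : Set.InjOn (proj m n) (Pset m n) := by
  intro x hx y hy h
  have hlow : ∀ j : Fin (m+n+2), (j:ℕ) < m → x j = y j := by
    intro j hj
    have := congrFun h ⟨(j:ℕ), by omega⟩
    simp only [proj, if_pos (show ((⟨(j:ℕ), by omega⟩ : Fin (m+n)) : ℕ) < m from hj)] at this
    have ej : (⟨((⟨(j:ℕ), by omega⟩ : Fin (m+n)) : ℕ), by omega⟩ : Fin (m+n+2)) = j :=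
      Fin.ext rfl
    rwa [ej] at this
  have hhigh : ∀ j : Fin (m+n+2), m + 1 ≤ (j:ℕ) → (j:ℕ) < m+n+1 → x j = y j := by
    intro j hj1 hj2
    have := congrFun h ⟨(j:ℕ) - 1, by omega⟩
    simp only [proj, if_neg (show ¬ ((⟨(j:ℕ) - 1, by omega⟩ : Fin (m+n)) : ℕ) < m by simp; omega)] at this
    have ej : (⟨((⟨(j:ℕ) - 1, by omega⟩ : Fin (m+n)) : ℕ) + 1, by omega⟩ : Fin (m+n+2)) = j :=
      Fin.ext (by simp; omega)
    rwa [ej] at this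
  have hSA : ∑ j ∈ univ.filter (fun j : Fin (m+n+2) => (j:ℕ) < m), x j
      = ∑ j ∈ univ.filter (fun j : Fin (m+n+2) => (j:ℕ) < m), y j := by
    rw [← sumA_proj, ← sumA_proj, h]
  have hSB : ∑ j ∈ univ.filter (fun j : Fin (m+n+2) => m + 1 ≤ (j:ℕ) ∧ (j:ℕ) < m+n+1), x j
      = ∑ j ∈ univ.filter (fun j : Fin (m+n+2) => m + 1 ≤ (j:ℕ) ∧ (j:ℕ) < m+n+1), y j := by
    rw [← sumB_proj, ← sumB_proj, h]
  funext j
  rcases lt_or_ge (j:ℕ) m with hj | hj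
  · exact hlow j hj
  rcases eq_or_lt_of_le hj with hj' | hj'
  · have ej : j = ⟨m, by omega⟩ := Fin.ext hj'.symm
    rw [ej]
    have h1 := sum_split_A m n hx
    have h2 := sum_split_A m n hy
    rw [hSA] at h1
    linarith
  rcases lt_or_ge (j:ℕ) (m+n+1) with hj2 | hj2
  · exact hhigh j hj' hj2
  · have ej : j = ⟨m+n+1, by omega⟩ := Fin.ext (show (j:ℕ) = m+n+1 by have := j.2; omega)
    rw [ej]
    have h1 := sum_split_B m n hx
    have h2 := sum_split_B m n hy
    rw [hSB] at h1
    linarith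

lemma proj_mem_chain {x : Fin (m+n+2) → ℝ} (hx : x ∈ Pset m n) :
    proj m n x ∈ chainPolytope m n := by
  obtain ⟨hx0, hxA, hxB⟩ := hx
  refine ⟨fun k => ?_, ?_, ?_⟩
  · simp only [proj]; split <;> apply hx0
  · rw [sumA_proj]
    have := sum_split_A m n ⟨hx0, hxA, hxB⟩
    have := hx0 ⟨m, by omega⟩
    linarith
  · rw [sumB_proj]
    have := sum_split_B m n ⟨hx0, hxA, hxB⟩
    have := hx0 ⟨m+n+1, by omega⟩
    linarith

noncomputable def lift (y : Fin (m+n) → ℝ) : Fin (m+n+2) → ℝ := fun j =>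
  if h : (j:ℕ) < m then y ⟨(j:ℕ), by omega⟩
  else if hm' : (j:ℕ) = m then 1 - ∑ k ∈ univ.filter (fun k : Fin (m+n) => (k:ℕ) < m), y k
  else if h2 : (j:ℕ) < m+n+1 then y ⟨(j:ℕ) - 1, by omega⟩
  else 1 - ∑ k ∈ univ.filter (fun k : Fin (m+n) => m ≤ (k:ℕ)), y k

lemma proj_lift (y : Fin (m+n) → ℝ) : proj m n (lift m n y) = y := by
  funext k
  have hk2 := k.2
  by_cases hk : (k:ℕ) < m
  · simp only [proj, if_pos hk, lift, dif_pos hk]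
  · simp only [proj, if_neg hk, lift]
    rw [dif_neg (by omega), dif_neg (by omega), dif_pos (by omega)]
    congr 1

lemma lift_val_m (y : Fin (m+n) → ℝ) :
    lift m n y ⟨m, by omega⟩ = 1 - ∑ k ∈ univ.filter (fun k : Fin (m+n) => (k:ℕ) < m), y k := by
  simp [lift]

lemma lift_val_top (y : Fin (m+n) → ℝ) :
    lift m n y ⟨m+n+1, by omega⟩
      = 1 - ∑ k ∈ univ.filter (fun k : Fin (m+n) => m ≤ (k:ℕ)), y k := by
  simp only [lift]
  rw [dif_neg (by omega), dif_neg (by omega), dif_neg (by omega)]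

lemma lift_mem {y : Fin (m+n) → ℝ} (hy : y ∈ chainPolytope m n) :
    lift m n y ∈ Pset m n := by
  obtain ⟨hy0, hyA, hyB⟩ := hy
  have hA' : ∑ j ∈ univ.filter (fun j : Fin (m+n+2) => (j:ℕ) < m), lift m n y j
      = ∑ k ∈ univ.filter (fun k : Fin (m+n) => (k:ℕ) < m), y k := by
    rw [← sumA_proj, proj_lift]
  have hB' : ∑ j ∈ univ.filter (fun j : Fin (m+n+2) => m + 1 ≤ (j:ℕ) ∧ (j:ℕ) < m+n+1),
        lift m n y j
      = ∑ k ∈ univ.filter (fun k : Fin (m+n) => m ≤ (k:ℕ)), y k := by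
    rw [← sumB_proj, proj_lift]
  refine ⟨fun j => ?_, ?_, ?_⟩
  · simp only [lift]
    split
    · apply hy0
    split
    · linarith
    split
    · apply hy0
    · linarith
  · rw [← Finset.add_sum_erase _ _ (mk_m_mem_FA m n), FA_erase, hA', lift_val_m]
    ring
  · rw [← Finset.add_sum_erase _ _ (mk_top_mem_FB m n), FB_erase, hB', lift_val_top]
    ring

lemma image_eq : proj m n '' Pset m n = chainPolytope m n := by
  apply le_antisymm
  · rintro _ ⟨x, hx, rfl⟩
    exact proj_mem_chain m n hx
  · intro y hy
    exact ⟨lift m n y, lift_mem m n hy, proj_lift m n y⟩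

lemma proj_lattice {x : Fin (m+n+2) → ℝ} (hx : x ∈ latticePts (m+n+2)) :
    proj m n x ∈ latticePts (m+n) := by
  intro k
  simp only [proj]
  split
  · exact hx _
  · exact hx _

lemma lift_lattice {y : Fin (m+n) → ℝ} (hy : y ∈ latticePts (m+n)) :
    lift m n y ∈ latticePts (m+n+2) := by
  choose z hz using hy
  intro j
  simp only [lift]
  split
  · exact ⟨z _, hz _⟩
  split
  · refine ⟨1 - ∑ k ∈ univ.filter (fun k : Fin (m+n) => (k:ℕ) < m), z k, ?_⟩
    push_cast
    rw [Finset.sum_congr rfl (fun k _ => hz k)]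
  split
  · exact ⟨z _, hz _⟩
  · refine ⟨1 - ∑ k ∈ univ.filter (fun k : Fin (m+n) => m ≤ (k:ℕ)), z k, ?_⟩
    push_cast
    rw [Finset.sum_congr rfl (fun k _ => hz k)]

end Stmt6

/-- The projection deleting the `(m+1)`-st and `(m+n+2)`-nd coordinates is injective on
the edge polytope of `K_{m+1,n+1}`, maps it onto the chain polytope of `Π_{m,n}`, and
maps the lattice points of the edge polytope bijectively onto the lattice points of the
chain polytope. -/
theorem stmt_6 (m n : ℕ) (hm : 1 ≤ m) (hn : 1 ≤ n) :
    Set.InjOn (proj m n) (edgePolytopeBip m n) ∧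
    proj m n '' edgePolytopeBip m n = chainPolytope m n ∧
    Set.BijOn (proj m n) (edgePolytopeBip m n ∩ latticePts (m + n + 2))
      (chainPolytope m n ∩ latticePts (m + n)) := by
  rw [Stmt6.edge_eq]
  refine ⟨Stmt6.inj_on_Pset m n, Stmt6.image_eq m n, ?_, ?_, ?_⟩
  · rintro x ⟨hxP, hxL⟩
    exact ⟨Stmt6.proj_mem_chain m n hxP, Stmt6.proj_lattice m n hxL⟩
  · exact (Stmt6.inj_on_Pset m n).mono Set.inter_subset_left
  · rintro y ⟨hyQ, hyL⟩
    exact ⟨Stmt6.lift m n y, ⟨Stmt6.lift_mem m n hyQ, Stmt6.lift_lattice m n hyL⟩,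
      Stmt6.proj_lift m n y⟩
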